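/- Let α and β be distinct monic irreducible polynomials in ℝ[y]. Then (α/β)·(β/α) = (-1)^(deg α · deg β), where (α/β) = 1 if α is congruent to a square modulo β in ℝ[y] and -1 otherwise. -/

import Mathlib

open Polynomial Classical

noncomputable def legendreSymbolR (α β : Polynomial ℝ) : ℤ :=
  if ∃ s t : Polynomial ℝ, α - s ^ 2 = β * t then 1 else -1

lemma exists_pq (u v : ℝ) : ∃ p q : ℝ, p ^ 2 - q ^ 2 = u ∧ 2 * p * q = v := by
  obtain ⟨z, hz⟩ := IsAlgClosed.exists_pow_nat_eq (k := ℂ) ⟨u, v⟩ (n := 2) zero_lt_two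
  refine ⟨z.re, z.im, ?_, ?_⟩
  · have h := congrArg Complex.re hz
    simp [pow_two, Complex.mul_re] at h
    nlinarith [h]
  · have h := congrArg Complex.im hz
    simp [pow_two, Complex.mul_im] at h
    nlinarith [h]

lemma legA (b : ℝ) (α : ℝ[X]) :
    (∃ s t : ℝ[X], α - s ^ 2 = (X - C b) * t) ↔ 0 ≤ α.eval b := by
  constructor
  · rintro ⟨s, t, h⟩
    have h2 := congrArg (eval b) h
    simp at h2
    nlinarith [sq_nonneg (s.eval b), h2]
  · intro h
    obtain ⟨t, ht⟩ := (dvd_iff_isRoot (p := α - (C (Real.sqrt (α.eval b))) ^ 2) (a := b)).2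
      (by simp [IsRoot, Real.sq_sqrt h, sub_self])
    exact ⟨C (Real.sqrt (α.eval b)), t, ht⟩

lemma legB (c d u v w : ℝ) (hd : d ≠ 0) :
    ∃ s t : ℝ[X], (C u * (X - C c) ^ 2 + C v * (X - C c) + C w) - s ^ 2
      = ((X - C c) ^ 2 + C (d ^ 2)) * t := by
  obtain ⟨p, q, h1, h2⟩ := exists_pq (w - u * d ^ 2) (v * d)
  set k := q / d with hk
  have hq : q = k * d := by rw [hk, div_mul_cancel₀ q hd]
  have hv : v = 2 * p * k := by
    have h3 : 2 * p * (k * d) = v * d := by rw [← hq]; exact h2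
    have := mul_right_cancel₀ hd (by linarith : (2 * p * k) * d = v * d)
    linarith
  have hw : w = p ^ 2 - k ^ 2 * d ^ 2 + u * d ^ 2 := by
    rw [hq] at h1; nlinarith [h1]
  refine ⟨C p + C k * (X - C c), C (u - k ^ 2), ?_⟩
  rw [hv, hw]
  simp only [C_add, C_sub, C_mul, C_pow, map_ofNat]
  ring

lemma monic_deg2_eq (p : ℝ[X]) (hm : p.Monic) (h2 : p.natDegree = 2) :
    p = X ^ 2 + C (p.coeff 1) * X + C (p.coeff 0) := by
  ext n
  simp only [coeff_add, coeff_X_pow, coeff_C_mul, coeff_X, coeff_C]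
  match n with
  | 0 => simp
  | 1 => simp
  | 2 =>
    have := hm.coeff_natDegree
    rw [h2] at this
    simp [this]
  | (m+3) =>
    have : p.coeff (m+3) = 0 := coeff_eq_zero_of_natDegree_lt (by omega)
    simp [this]

lemma structure_lemma (p : ℝ[X]) (hm : p.Monic) (hirr : Irreducible p) :
    (∃ a, p = X - C a) ∨ ∃ c d : ℝ, d ≠ 0 ∧ p = (X - C c) ^ 2 + C (d ^ 2) := by
  have hd2 : p.natDegree ≤ 2 := hirr.natDegree_le_two
  have hd1 : 1 ≤ p.natDegree := hirr.natDegree_pos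
  interval_cases h : p.natDegree
  · left
    refine ⟨-p.coeff 0, ?_⟩
    rw [hm.eq_X_add_C h]
    simp [sub_neg_eq_add]
  · right
    set b := p.coeff 1 with hb
    set c : ℝ := -b / 2 with hc
    set w : ℝ := p.coeff 0 - c ^ 2 with hw
    have hbc : b = -2 * c := by rw [hc]; ring
    have hrep : p = (X - C c) ^ 2 + C w := by
      rw [monic_deg2_eq p hm h, ← hb, hbc, hw]
      simp only [C_sub, C_mul, C_pow, C_neg, map_ofNat]
      ring
    have hwpos : 0 < w := by
      by_contra hle
      push_neg at hle
      have hroot : p.IsRoot (c + Real.sqrt (-w)) := by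
        rw [hrep]
        simp [IsRoot]
        rw [Real.sq_sqrt (by linarith : (0:ℝ) ≤ -w)]
        ring
      obtain ⟨t, ht⟩ := dvd_iff_isRoot.2 hroot
      rcases hirr.isUnit_or_isUnit ht with hu | hu
      · exact Polynomial.not_isUnit_X_sub_C _ hu
      · have h1 : t.natDegree = 0 := natDegree_eq_zero_of_isUnit hu
        have h2 : t ≠ 0 := hu.ne_zero
        have := natDegree_mul (X_sub_C_ne_zero (c + Real.sqrt (-w))) h2
        rw [← ht, h, natDegree_X_sub_C, h1] at this
        omega
    exact ⟨c, Real.sqrt w, by positivity, by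
      rw [hrep, Real.sq_sqrt hwpos.le]⟩

lemma nd_quad (c d : ℝ) : ((X - C c) ^ 2 + C (d ^ 2) : ℝ[X]).natDegree = 2 := by
  compute_degree!

theorem quadratic_reciprocity_real_polynomials
    (α β : Polynomial ℝ) (hα : α.Monic) (hβ : β.Monic)
    (hαirr : Irreducible α) (hβirr : Irreducible β) (hne : α ≠ β) :
    legendreSymbolR α β * legendreSymbolR β α
      = (-1) ^ (α.natDegree * β.natDegree) := by
  unfold legendreSymbolR
  rcases structure_lemma α hα hαirr with ⟨a, rfl⟩ | ⟨a, e, he, rfl⟩ <;>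
    rcases structure_lemma β hβ hβirr with ⟨b, rfl⟩ | ⟨c, d, hd, rfl⟩
  · -- both linear
    have hab : a ≠ b := fun h => hne (by rw [h])
    rw [natDegree_X_sub_C, natDegree_X_sub_C]
    rcases lt_or_gt_of_ne hab with h | h
    · rw [if_pos ((legA b _).2 (by simp only [eval_sub, eval_X, eval_C]; linarith)),
        if_neg (fun hc => by
          have := (legA a _).1 hc
          simp only [eval_sub, eval_X, eval_C] at this
          linarith)]
      norm_num
    · rw [if_neg (fun hc => by
          have := (legA b _).1 hc
          simp only [eval_sub, eval_X, eval_C] at this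
          linarith),
        if_pos ((legA a _).2 (by simp only [eval_sub, eval_X, eval_C]; linarith))]
      norm_num
  · -- α linear, β quadratic
    have hrw : (X : ℝ[X]) - C a
        = C 0 * (X - C c) ^ 2 + C 1 * (X - C c) + C (c - a) := by
      simp only [map_zero, map_one, zero_mul, one_mul, C_sub]
      ring
    obtain ⟨s, t, hst⟩ := legB c d 0 1 (c - a) hd
    rw [← hrw] at hst
    rw [if_pos ⟨s, t, hst⟩,
      if_pos ((legA a _).2 (by
        simp only [eval_add, eval_pow, eval_sub, eval_X, eval_C]
        positivity))]
    rw [natDegree_X_sub_C, nd_quad]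
    norm_num
  · -- α quadratic, β linear
    have hrw : (X : ℝ[X]) - C b
        = C 0 * (X - C a) ^ 2 + C 1 * (X - C a) + C (a - b) := by
      simp only [map_zero, map_one, zero_mul, one_mul, C_sub]
      ring
    obtain ⟨s, t, hst⟩ := legB a e 0 1 (a - b) he
    rw [← hrw] at hst
    rw [if_pos ((legA b _).2 (by
        simp only [eval_add, eval_pow, eval_sub, eval_X, eval_C]
        positivity)),
      if_pos ⟨s, t, hst⟩]
    rw [natDegree_X_sub_C, nd_quad]
    norm_num
  · -- both quadratic
    have hrw1 : (X - C a) ^ 2 + C (e ^ 2)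
        = C 1 * (X - C c) ^ 2 + C (2 * (c - a)) * (X - C c) + C ((c - a) ^ 2 + e ^ 2) := by
      simp only [map_one, one_mul, C_add, C_sub, C_mul, C_pow, map_ofNat]
      ring
    have hrw2 : (X - C c) ^ 2 + C (d ^ 2)
        = C 1 * (X - C a) ^ 2 + C (2 * (a - c)) * (X - C a) + C ((a - c) ^ 2 + d ^ 2) := by
      simp only [map_one, one_mul, C_add, C_sub, C_mul, C_pow, map_ofNat]
      ring
    obtain ⟨s1, t1, h1⟩ := legB c d 1 (2 * (c - a)) ((c - a) ^ 2 + e ^ 2) hd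
    obtain ⟨s2, t2, h2⟩ := legB a e 1 (2 * (a - c)) ((a - c) ^ 2 + d ^ 2) he
    rw [← hrw1] at h1
    rw [← hrw2] at h2
    rw [if_pos ⟨s1, t1, h1⟩, if_pos ⟨s2, t2, h2⟩, nd_quad, nd_quad]
    norm_num
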